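/- (N-qubit GHZ entanglement) Let N ≥ 2 and let Φ ≠ 0 be a real number. Suppose that for every pair a < b in {1,…,N} the entangling phase satisfies Φ_{ab} = (2·n_{ab} + 1)·Φ for some integer n_{ab} ≥ 0 (so the ratio of any two entangling phases is a ratio of two odd integers). Then for every integer n ≥ 0 and every subset S ⊆ {1,…,N} with 1 ≤ |S| ≤ ⌊N/2⌋, at time t = (2·n + 1)·π/Φ the reduced density matrix ρ_S(t) of the qubits in S, with entries ρ_S(t)_{xy} = Σ_{j : Sᶜ → {0,1}} ψ_t(x∪j)·conj(ψ_t(y∪j)), satisfies 2·(1 − Σ_{x,y}|ρ_S(t)_{xy}|²) = 1; i.e. the time-evolved state periodically becomes a generalised N-qubit GHZ state with I-concurrence 1 (1 ebit of entanglement) across every bipartition. -/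

import Mathlib

open Real

/-- Combine an assignment `x` of bits to the qubits in `S` with an assignment
`j` of bits to the qubits in `Sᶜ` into a full bit string. -/
def QGEM.merge {N : ℕ} (S : Finset (Fin N)) (x : {i : Fin N // i ∈ S} → Fin 2)
    (j : {i : Fin N // i ∈ Sᶜ} → Fin 2) : Fin N → Fin 2 :=
  fun i => if h : i ∈ S then x ⟨i, h⟩ else j ⟨i, Finset.mem_compl.mpr h⟩

open ComplexConjugate

private lemma QGEM.exp_odd' (r : ℝ) (k : ℤ) (hr : r = (2 * (k : ℝ) + 1) * π) :
    Complex.exp (Complex.I * (r : ℂ)) = -1 := by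
  have h : Complex.I * (r : ℂ) = (k : ℂ) * (2 * (π : ℂ) * Complex.I) + (π : ℂ) * Complex.I := by
    rw [hr]; push_cast; ring
  rw [h, Complex.exp_add, Complex.exp_int_mul_two_pi_mul_I, Complex.exp_pi_mul_I, one_mul]


private lemma QGEM.prod_dite_one {α : Type*} [Fintype α] (p : α → Prop) [DecidablePred p]
    (f : ∀ a, p a → ℂ) :
    (∏ a, if h : p a then f a h else 1) = ∏ a : {x // p x}, f a.1 a.2 := by
  classical
  calc (∏ a, if h : p a then f a h else 1)
      = ∏ a ∈ Finset.univ.filter p, (if h : p a then f a h else 1) :=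
        (Finset.prod_subset (Finset.filter_subset _ _)
          (fun a _ ha => dif_neg (by simpa using ha))).symm
    _ = ∏ a : {x // p x}, (if h : p a.1 then f a.1 h else 1) :=
        (Finset.prod_subtype _ (by simp) _)
    _ = ∏ a : {x // p x}, f a.1 a.2 :=
        Finset.prod_congr rfl fun a _ => dif_pos a.2

private lemma QGEM.prod_pair_swap {β : Type*} [Fintype β] [LinearOrder β] (U : β → β → ℂ)
    (hdiag : ∀ p, U p p = 1) :
    (∏ p, ∏ q, if p < q then U p q * U q p else 1) = ∏ p, ∏ q, U p q := by
  have hsplit : ∀ p q : β, (if p < q then U p q * U q p else 1)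
      = (if p < q then U p q else 1) * (if p < q then U q p else 1) := by
    intro p q; split <;> simp
  calc (∏ p, ∏ q, if p < q then U p q * U q p else 1)
      = (∏ p, ∏ q, if p < q then U p q else 1) * ∏ p, ∏ q, if p < q then U q p else 1 := by
        simp only [hsplit, Finset.prod_mul_distrib]
    _ = (∏ p, ∏ q, if p < q then U p q else 1) * ∏ p, ∏ q, if q < p then U p q else 1 := by
        rw [Finset.prod_comm (f := fun p q => if p < q then U q p else 1)]
    _ = ∏ p, ∏ q, (if p < q then U p q else 1) * (if q < p then U p q else 1) := by
        simp only [Finset.prod_mul_distrib]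
    _ = ∏ p, ∏ q, U p q := by
        refine Finset.prod_congr rfl fun p _ => Finset.prod_congr rfl fun q _ => ?_
        rcases lt_trichotomy p q with h | h | h
        · rw [if_pos h, if_neg (asymm h), mul_one]
        · subst h; simp [hdiag]
        · rw [if_neg (asymm h), if_pos h, one_mul]

private lemma QGEM.prod_prod_dite {N : ℕ} (S : Finset (Fin N))
    (η : {i : Fin N // i ∈ S} → {i : Fin N // i ∈ Sᶜ} → ℂ) :
    (∏ p : Fin N, ∏ q : Fin N,
      if hp : p ∈ S then (if hq : q ∈ Sᶜ then η ⟨p, hp⟩ ⟨q, hq⟩ else 1) else 1)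
      = ∏ u, ∏ w, η u w := by
  classical
  have h1 : ∀ p : Fin N, (∏ q : Fin N,
      if hp : p ∈ S then (if hq : q ∈ Sᶜ then η ⟨p, hp⟩ ⟨q, hq⟩ else 1) else 1)
      = (if hp : p ∈ S then (∏ w : {i : Fin N // i ∈ Sᶜ}, η ⟨p, hp⟩ w) else 1) := by
    intro p
    by_cases hp : p ∈ S
    · simp only [dif_pos hp]
      refine (QGEM.prod_dite_one (fun q => q ∈ Sᶜ) (fun q hq => η ⟨p, hp⟩ ⟨q, hq⟩)).trans ?_
      exact Finset.prod_congr (by congr!) fun w _ => by rw [Subtype.coe_eta]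
    · simp only [dif_neg hp, Finset.prod_const_one]
  simp only [h1]
  refine (QGEM.prod_dite_one (fun p => p ∈ S) (fun p hp => ∏ w, η ⟨p, hp⟩ w)).trans ?_
  exact Finset.prod_congr (by congr!) fun u _ => by rw [Subtype.coe_eta]

section Phase

variable {N : ℕ} (S : Finset (Fin N))

private lemma QGEM.phase (φ : Fin N → Fin N → Fin 2 → Fin 2 → ℝ) (Φ0 : ℝ) (hΦ0 : Φ0 ≠ 0)
    (hodd : ∀ a b : Fin N, a < b → ∃ n : ℕ,
      φ a b 0 1 + φ a b 1 0 - φ a b 0 0 - φ a b 1 1 = (2 * (n : ℝ) + 1) * Φ0)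
    (phiJ : (Fin N → Fin 2) → ℝ)
    (hphiJ : ∀ J, phiJ J = ∑ p, ∑ q, if p < q then φ p q (J p) (J q) else 0)
    (n : ℕ) (x y : {i : Fin N // i ∈ S} → Fin 2) (j j' : {i : Fin N // i ∈ Sᶜ} → Fin 2) :
    Complex.exp (Complex.I * ((((2 * (n : ℝ) + 1) * π / Φ0) *
        (phiJ (QGEM.merge S x j) - phiJ (QGEM.merge S y j)
          - phiJ (QGEM.merge S x j') + phiJ (QGEM.merge S y j')) : ℝ) : ℂ))
      = ∏ u, ∏ w, (if x u = y u ∨ j w = j' w then (1 : ℂ) else -1) := by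
  classical
  set t : ℝ := (2 * (n : ℝ) + 1) * π / Φ0 with ht
  set g : Fin N → Fin N → ℝ := fun p q =>
    (if p < q then φ p q (QGEM.merge S x j p) (QGEM.merge S x j q) else 0)
    - (if p < q then φ p q (QGEM.merge S y j p) (QGEM.merge S y j q) else 0)
    - (if p < q then φ p q (QGEM.merge S x j' p) (QGEM.merge S x j' q) else 0)
    + (if p < q then φ p q (QGEM.merge S y j' p) (QGEM.merge S y j' q) else 0) with hg
  set U : Fin N → Fin N → ℂ := fun p q =>
    if hp : p ∈ S then (if hq : q ∈ Sᶜ then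
      (if x ⟨p, hp⟩ = y ⟨p, hp⟩ ∨ j ⟨q, hq⟩ = j' ⟨q, hq⟩ then (1 : ℂ) else -1) else 1) else 1
    with hU
  have hmS : ∀ (z : {i : Fin N // i ∈ S} → Fin 2) (w : {i : Fin N // i ∈ Sᶜ} → Fin 2)
      (p : Fin N) (hp : p ∈ S), QGEM.merge S z w p = z ⟨p, hp⟩ := fun z w p hp => dif_pos hp
  have hmC : ∀ (z : {i : Fin N // i ∈ S} → Fin 2) (w : {i : Fin N // i ∈ Sᶜ} → Fin 2)
      (p : Fin N) (hp : p ∉ S),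
      QGEM.merge S z w p = w ⟨p, Finset.mem_compl.mpr hp⟩ := fun z w p hp => dif_neg hp
  have htΦ : t * Φ0 = (2 * (n : ℝ) + 1) * π := by
    rw [ht, div_mul_cancel₀ _ hΦ0]
  -- the ±odd·Φ0 exponential
  have hkey : ∀ (m : ℕ) (s : ℝ),
      (s = (2 * (m : ℝ) + 1) * Φ0 ∨ s = -((2 * (m : ℝ) + 1) * Φ0)) →
      Complex.exp (Complex.I * ((t * s : ℝ) : ℂ)) = -1 := by
    intro m s hs
    rcases hs with hs | hs
    · refine QGEM.exp_odd' _ (2 * (m : ℤ) * n + m + n) ?_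
      push_cast
      rw [hs]
      linear_combination (2 * (m : ℝ) + 1) * htΦ
    · refine QGEM.exp_odd' _ (-(2 * (m : ℤ) * n + m + n) - 1) ?_
      push_cast
      rw [hs]
      linear_combination (-(2 * (m : ℝ) + 1)) * htΦ
  have hsum : t * (phiJ (QGEM.merge S x j) - phiJ (QGEM.merge S y j)
      - phiJ (QGEM.merge S x j') + phiJ (QGEM.merge S y j'))
      = ∑ p, ∑ q, t * g p q := by
    simp only [hphiJ, hg]
    rw [← Finset.sum_sub_distrib, ← Finset.sum_sub_distrib, ← Finset.sum_add_distrib,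
      Finset.mul_sum]
    refine Finset.sum_congr rfl fun p _ => ?_
    rw [← Finset.sum_sub_distrib, ← Finset.sum_sub_distrib, ← Finset.sum_add_distrib,
      Finset.mul_sum]
  have hdiag : ∀ p, U p p = 1 := by
    intro p
    by_cases hp : p ∈ S
    · simp [hU, hp]
    · simp [hU, hp]
  have hpoint : ∀ p q : Fin N, Complex.exp (Complex.I * ((t * g p q : ℝ) : ℂ))
      = if p < q then U p q * U q p else 1 := by
    intro p q
    by_cases hpq : p < q
    swap
    · rw [if_neg hpq]
      have h0 : g p q = 0 := by simp [hg, hpq]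
      rw [h0]; simp
    rw [if_pos hpq]
    by_cases hp : p ∈ S <;> by_cases hq : q ∈ S
    · -- both in S
      have hU1 : U p q = 1 := by simp [hU, hp, hq]
      have hU2 : U q p = 1 := by simp [hU, hq, hp]
      have h0 : g p q = 0 := by
        simp only [hg]
        rw [if_pos hpq, if_pos hpq, if_pos hpq, if_pos hpq,
          hmS x j p hp, hmS x j q hq, hmS y j p hp, hmS y j q hq,
          hmS x j' p hp, hmS x j' q hq, hmS y j' p hp, hmS y j' q hq]
        ring
      rw [h0, hU1, hU2]; simp
    · -- p ∈ S, q ∉ S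
      have hq' : q ∈ Sᶜ := Finset.mem_compl.mpr hq
      have hU1 : U p q = (if x ⟨p, hp⟩ = y ⟨p, hp⟩ ∨ j ⟨q, hq'⟩ = j' ⟨q, hq'⟩
          then (1 : ℂ) else -1) := by simp [hU, hp, hq, hq']
      have hU2 : U q p = 1 := by simp [hU, hq]
      rw [hU1, hU2, mul_one]
      have hgv : g p q = φ p q (x ⟨p, hp⟩) (j ⟨q, hq'⟩) - φ p q (y ⟨p, hp⟩) (j ⟨q, hq'⟩)
          - φ p q (x ⟨p, hp⟩) (j' ⟨q, hq'⟩) + φ p q (y ⟨p, hp⟩) (j' ⟨q, hq'⟩) := by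
        simp only [hg]
        rw [if_pos hpq, if_pos hpq, if_pos hpq, if_pos hpq,
          hmS x j p hp, hmC x j q hq, hmS y j p hp, hmC y j q hq,
          hmS x j' p hp, hmC x j' q hq, hmS y j' p hp, hmC y j' q hq]
      rw [hgv]
      generalize x ⟨p, hp⟩ = a
      generalize y ⟨p, hp⟩ = b
      generalize j ⟨q, hq'⟩ = c
      generalize j' ⟨q, hq'⟩ = d
      by_cases hab : a = b
      · rw [if_pos (Or.inl hab), hab]
        have h0 : t * (φ p q b c - φ p q b c - φ p q b d + φ p q b d) = 0 := by ring
        rw [h0]; simp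
      by_cases hcd : c = d
      · rw [if_pos (Or.inr hcd), hcd]
        have h0 : t * (φ p q a d - φ p q b d - φ p q a d + φ p q b d) = 0 := by ring
        rw [h0]; simp
      rw [if_neg (by tauto)]
      obtain ⟨m, hm⟩ := hodd p q hpq
      have h2 : ∀ z : Fin 2, z = 0 ∨ z = 1 := by decide
      rcases h2 a with ha | ha <;> rcases h2 b with hb | hb <;>
        rcases h2 c with hc | hc <;> rcases h2 d with hd | hd <;>
        subst ha <;> subst hb <;> subst hc <;> subst hd <;>
        first
          | exact absurd rfl hab
          | exact absurd rfl hcd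
          | exact hkey m _ (Or.inl (by linarith [hm]))
          | exact hkey m _ (Or.inr (by linarith [hm]))
    · -- p ∉ S, q ∈ S
      have hp' : p ∈ Sᶜ := Finset.mem_compl.mpr hp
      have hU1 : U p q = 1 := by simp [hU, hp]
      have hU2 : U q p = (if x ⟨q, hq⟩ = y ⟨q, hq⟩ ∨ j ⟨p, hp'⟩ = j' ⟨p, hp'⟩
          then (1 : ℂ) else -1) := by simp [hU, hq, hp, hp']
      rw [hU1, hU2, one_mul]
      have hgv : g p q = φ p q (j ⟨p, hp'⟩) (x ⟨q, hq⟩) - φ p q (j ⟨p, hp'⟩) (y ⟨q, hq⟩)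
          - φ p q (j' ⟨p, hp'⟩) (x ⟨q, hq⟩) + φ p q (j' ⟨p, hp'⟩) (y ⟨q, hq⟩) := by
        simp only [hg]
        rw [if_pos hpq, if_pos hpq, if_pos hpq, if_pos hpq,
          hmC x j p hp, hmS x j q hq, hmC y j p hp, hmS y j q hq,
          hmC x j' p hp, hmS x j' q hq, hmC y j' p hp, hmS y j' q hq]
      rw [hgv]
      generalize x ⟨q, hq⟩ = a
      generalize y ⟨q, hq⟩ = b
      generalize j ⟨p, hp'⟩ = c
      generalize j' ⟨p, hp'⟩ = d
      by_cases hab : a = b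
      · rw [if_pos (Or.inl hab), hab]
        have h0 : t * (φ p q c b - φ p q c b - φ p q d b + φ p q d b) = 0 := by ring
        rw [h0]; simp
      by_cases hcd : c = d
      · rw [if_pos (Or.inr hcd), hcd]
        have h0 : t * (φ p q d a - φ p q d b - φ p q d a + φ p q d b) = 0 := by ring
        rw [h0]; simp
      rw [if_neg (by tauto)]
      obtain ⟨m, hm⟩ := hodd p q hpq
      have h2 : ∀ z : Fin 2, z = 0 ∨ z = 1 := by decide
      rcases h2 a with ha | ha <;> rcases h2 b with hb | hb <;>
        rcases h2 c with hc | hc <;> rcases h2 d with hd | hd <;>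
        subst ha <;> subst hb <;> subst hc <;> subst hd <;>
        first
          | exact absurd rfl hab
          | exact absurd rfl hcd
          | exact hkey m _ (Or.inl (by linarith [hm]))
          | exact hkey m _ (Or.inr (by linarith [hm]))
    · -- both out of S
      have hU1 : U p q = 1 := by simp [hU, hp]
      have hU2 : U q p = 1 := by simp [hU, hq]
      have h0 : g p q = 0 := by
        simp only [hg]
        rw [if_pos hpq, if_pos hpq, if_pos hpq, if_pos hpq,
          hmC x j p hp, hmC x j q hq, hmC y j p hp, hmC y j q hq,
          hmC x j' p hp, hmC x j' q hq, hmC y j' p hp, hmC y j' q hq]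
        ring
      rw [h0, hU1, hU2]; simp
  calc Complex.exp (Complex.I * ((t * (phiJ (QGEM.merge S x j) - phiJ (QGEM.merge S y j)
          - phiJ (QGEM.merge S x j') + phiJ (QGEM.merge S y j')) : ℝ) : ℂ))
      = Complex.exp (∑ p, ∑ q, Complex.I * ((t * g p q : ℝ) : ℂ)) := by
        congr 1
        rw [hsum]
        push_cast
        rw [Finset.mul_sum]
        exact Finset.sum_congr rfl fun p _ => Finset.mul_sum _ _ _
    _ = ∏ p, ∏ q, Complex.exp (Complex.I * ((t * g p q : ℝ) : ℂ)) := by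
        rw [Complex.exp_sum]
        exact Finset.prod_congr rfl fun p _ => Complex.exp_sum _ _
    _ = ∏ p, ∏ q, (if p < q then U p q * U q p else 1) :=
        Finset.prod_congr rfl fun p _ => Finset.prod_congr rfl fun q _ => hpoint p q
    _ = ∏ p, ∏ q, U p q := QGEM.prod_pair_swap U hdiag
    _ = ∏ u, ∏ w, (if x u = y u ∨ j w = j' w then (1 : ℂ) else -1) := by
        rw [hU]
        exact QGEM.prod_prod_dite S (fun u w => if x u = y u ∨ j w = j' w then (1 : ℂ) else -1)

end Phase

private lemma QGEM.sum_prod_fin2 {α : Type*} [Fintype α] [DecidableEq α] (f : α → Fin 2 → ℂ) :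
    ∑ x : α → Fin 2, ∏ p, f p (x p) = ∏ p, ∑ a, f p a := by
  rw [Finset.prod_univ_sum, Fintype.piFinset_univ]


private lemma QGEM.count {N : ℕ} (S : Finset (Fin N)) (ha : 1 ≤ S.card) (hb : 1 ≤ Sᶜ.card) :
    (∑ x : {i : Fin N // i ∈ S} → Fin 2, ∑ y : {i : Fin N // i ∈ S} → Fin 2,
      ∑ j : {i : Fin N // i ∈ Sᶜ} → Fin 2, ∑ j' : {i : Fin N // i ∈ Sᶜ} → Fin 2,
        ∏ u, ∏ w, (if x u = y u ∨ j w = j' w then (1 : ℂ) else -1))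
      = 4 ^ S.card * 4 ^ Sᶜ.card / 2 := by
  classical
  have hcardS : Fintype.card {i : Fin N // i ∈ S} = S.card := Fintype.card_coe S
  have hcardC : Fintype.card {i : Fin N // i ∈ Sᶜ} = Sᶜ.card := Fintype.card_coe Sᶜ
  -- Q x y = product over S of ±1
  set Q : ({i : Fin N // i ∈ S} → Fin 2) → ({i : Fin N // i ∈ S} → Fin 2) → ℂ :=
    fun x y => ∏ u, (if x u = y u then (1 : ℂ) else -1) with hQdef
  have hQ : ∀ x y, Q x y = 1 ∨ Q x y = -1 := by
    intro x y
    refine mul_self_eq_one_iff.mp ?_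
    rw [hQdef]
    rw [← Finset.prod_mul_distrib]
    refine Finset.prod_eq_one fun u _ => ?_
    split <;> norm_num
  -- step 1 : inner double sum over j j'
  have step1 : ∀ x y, (∑ j : {i : Fin N // i ∈ Sᶜ} → Fin 2, ∑ j' : {i : Fin N // i ∈ Sᶜ} → Fin 2,
      ∏ u, ∏ w, (if x u = y u ∨ j w = j' w then (1 : ℂ) else -1))
      = (2 + 2 * Q x y) ^ Sᶜ.card := by
    intro x y
    have h1 : ∀ j j' : {i : Fin N // i ∈ Sᶜ} → Fin 2,
        (∏ u, ∏ w, (if x u = y u ∨ j w = j' w then (1 : ℂ) else -1))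
        = ∏ w, (if j w = j' w then (1 : ℂ) else Q x y) := by
      intro j j'
      rw [Finset.prod_comm]
      refine Finset.prod_congr rfl fun w _ => ?_
      by_cases hw : j w = j' w
      · simp [hw]
      · simp [hw, hQdef]
    simp only [h1]
    have h2 : ∀ j : {i : Fin N // i ∈ Sᶜ} → Fin 2,
        (∑ j' : {i : Fin N // i ∈ Sᶜ} → Fin 2, ∏ w, (if j w = j' w then (1 : ℂ) else Q x y))
        = (1 + Q x y) ^ Sᶜ.card := by
      intro j
      rw [QGEM.sum_prod_fin2 (fun w b => if j w = b then (1 : ℂ) else Q x y)]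
      have h3 : ∀ a : Fin 2, (∑ b : Fin 2, if a = b then (1 : ℂ) else Q x y) = 1 + Q x y := by
        intro a
        fin_cases a <;> simp [Fin.sum_univ_two] <;> ring
      calc (∏ w : {i : Fin N // i ∈ Sᶜ}, ∑ b : Fin 2, if j w = b then (1 : ℂ) else Q x y)
          = ∏ w : {i : Fin N // i ∈ Sᶜ}, (1 + Q x y) := Finset.prod_congr rfl fun w _ => h3 (j w)
        _ = (1 + Q x y) ^ Sᶜ.card := by rw [Finset.prod_const, Finset.card_univ, hcardC]
    simp only [h2]
    rw [Finset.sum_const, Finset.card_univ, Fintype.card_fun, hcardC, Fintype.card_fin,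
      nsmul_eq_mul]
    push_cast
    rw [show (2 + 2 * Q x y) = 2 * (1 + Q x y) by ring, mul_pow]
  simp only [step1]
  -- step 2 : pointwise rewrite using Q = ±1
  have step2 : ∀ x y, (2 + 2 * Q x y) ^ Sᶜ.card
      = 4 ^ Sᶜ.card / 2 + 4 ^ Sᶜ.card / 2 * Q x y := by
    intro x y
    rcases hQ x y with h | h <;> rw [h]
    · rw [show (2 + 2 * (1 : ℂ)) = 4 by norm_num]; ring
    · rw [show (2 + 2 * (-1 : ℂ)) = 0 by norm_num, zero_pow (Nat.one_le_iff_ne_zero.mp hb)]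
      ring
  simp only [step2]
  -- step 3 : sum over x y
  have hz : (∑ x : {i : Fin N // i ∈ S} → Fin 2, ∑ y : {i : Fin N // i ∈ S} → Fin 2, Q x y)
      = 0 := by
    have h4 : ∀ x : {i : Fin N // i ∈ S} → Fin 2,
        (∑ y : {i : Fin N // i ∈ S} → Fin 2, Q x y) = 0 := by
      intro x
      rw [hQdef]
      rw [QGEM.sum_prod_fin2 (fun u b => if x u = b then (1 : ℂ) else -1)]
      have h5 : ∀ a : Fin 2, (∑ b : Fin 2, if a = b then (1 : ℂ) else -1) = 0 := by
        intro a; fin_cases a <;> simp [Fin.sum_univ_two]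
      calc (∏ u : {i : Fin N // i ∈ S}, ∑ b : Fin 2, if x u = b then (1 : ℂ) else -1)
          = ∏ u : {i : Fin N // i ∈ S}, (0 : ℂ) := Finset.prod_congr rfl fun u _ => h5 (x u)
        _ = 0 := by
          rw [Finset.prod_const, Finset.card_univ, hcardS]
          exact zero_pow (by omega)
    simp only [h4, Finset.sum_const, smul_zero]
  simp only [Finset.sum_add_distrib, ← Finset.mul_sum]
  rw [hz, mul_zero, add_zero]
  rw [Finset.sum_const, Finset.sum_const, Finset.card_univ, Fintype.card_fun, hcardS,
    Fintype.card_fin, nsmul_eq_mul, nsmul_eq_mul]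
  push_cast
  rw [show ((4 : ℂ)) ^ S.card = 2 ^ S.card * 2 ^ S.card by rw [← mul_pow]; norm_num]
  ring

private lemma QGEM.mul4 (c A B C D : ℝ) :
    ((c : ℂ) * Complex.exp (Complex.I * (A : ℂ)) *
        conj ((c : ℂ) * Complex.exp (Complex.I * (B : ℂ)))) *
      conj ((c : ℂ) * Complex.exp (Complex.I * (C : ℂ)) *
        conj ((c : ℂ) * Complex.exp (Complex.I * (D : ℂ))))
    = (c : ℂ) ^ 4 * Complex.exp (Complex.I * ((A - B - C + D : ℝ) : ℂ)) := by
  have e1 : ∀ r : ℝ, conj (Complex.exp (Complex.I * (r : ℂ)))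
      = Complex.exp (-(Complex.I * (r : ℂ))) := by
    intro r
    rw [← Complex.exp_conj]
    congr 1
    rw [map_mul, Complex.conj_I, Complex.conj_ofReal, neg_mul]
  have e2 : ∀ r : ℝ, conj (Complex.exp (-(Complex.I * (r : ℂ))))
      = Complex.exp (Complex.I * (r : ℂ)) := by
    intro r
    rw [← Complex.exp_conj]
    congr 1
    rw [map_neg, map_mul, Complex.conj_I, Complex.conj_ofReal]
    ring
  simp only [map_mul, Complex.conj_ofReal, e1, e2, Complex.conj_conj]
  rw [show Complex.I * ((A - B - C + D : ℝ) : ℂ)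
      = Complex.I * (A : ℂ) + -(Complex.I * (B : ℂ)) + -(Complex.I * (C : ℂ))
        + Complex.I * (D : ℂ) by push_cast; ring]
  rw [Complex.exp_add, Complex.exp_add, Complex.exp_add]
  ring

/-- (N-qubit GHZ entanglement) If every signed entangling phase is an odd
multiple of a fixed `Φ ≠ 0`, then at the times `t = (2n+1)π/Φ` the time-evolved
N-body state has squared I-concurrence `2(1 − Tr ρ_S(t)²) = 1` across every
bipartition `S|Sᶜ` with `1 ≤ |S| ≤ ⌊N/2⌋`: it is a generalised GHZ state with
1 ebit across every bipartition. -/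
theorem N_body_GHZ_entanglement (N : ℕ) (hN : 2 ≤ N)
    (φ : Fin N → Fin N → Fin 2 → Fin 2 → ℝ)
    (Φ0 : ℝ) (hΦ0 : Φ0 ≠ 0)
    (hodd : ∀ a b : Fin N, a < b → ∃ n : ℕ,
      φ a b 0 1 + φ a b 1 0 - φ a b 0 0 - φ a b 1 1 = (2 * (n : ℝ) + 1) * Φ0)
    (phiJ : (Fin N → Fin 2) → ℝ)
    (hphiJ : ∀ J, phiJ J = ∑ p, ∑ q, if p < q then φ p q (J p) (J q) else 0)
    (ψ : ℝ → (Fin N → Fin 2) → ℂ)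
    (hψ : ∀ t J, ψ t J = Complex.ofReal (1 / Real.sqrt (2 ^ N)) *
      Complex.exp (Complex.I * Complex.ofReal (t * phiJ J))) :
    ∀ n : ℕ, ∀ S : Finset (Fin N), 1 ≤ S.card → S.card ≤ N / 2 →
      2 * (1 - ∑ x : {i : Fin N // i ∈ S} → Fin 2,
        ∑ y : {i : Fin N // i ∈ S} → Fin 2,
          ‖(∑ j : {i : Fin N // i ∈ Sᶜ} → Fin 2,
            ψ ((2 * (n : ℝ) + 1) * π / Φ0) (QGEM.merge S x j) *
              (starRingEnd ℂ) (ψ ((2 * (n : ℝ) + 1) * π / Φ0) (QGEM.merge S y j)))‖ ^ 2)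
        = 1 := by
  intro n S hS1 hS2
  classical
  set t : ℝ := (2 * (n : ℝ) + 1) * π / Φ0 with ht
  have hb : 1 ≤ Sᶜ.card := by
    rw [Finset.card_compl, Fintype.card_fin]
    omega
  have habN : S.card + Sᶜ.card = N := by
    rw [Finset.card_add_card_compl, Fintype.card_fin]
  have hT : ∀ (x y : {i : Fin N // i ∈ S} → Fin 2) (j j' : {i : Fin N // i ∈ Sᶜ} → Fin 2),
      (ψ t (QGEM.merge S x j) * (starRingEnd ℂ) (ψ t (QGEM.merge S y j))) *
        (starRingEnd ℂ) (ψ t (QGEM.merge S x j') * (starRingEnd ℂ) (ψ t (QGEM.merge S y j')))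
      = ((1 : ℂ) / 4 ^ N) *
          ∏ u, ∏ w, (if x u = y u ∨ j w = j' w then (1 : ℂ) else -1) := by
    intro x y j j'
    rw [hψ, hψ, hψ, hψ, QGEM.mul4]
    have harg : t * phiJ (QGEM.merge S x j) - t * phiJ (QGEM.merge S y j)
        - t * phiJ (QGEM.merge S x j') + t * phiJ (QGEM.merge S y j')
        = t * (phiJ (QGEM.merge S x j) - phiJ (QGEM.merge S y j)
          - phiJ (QGEM.merge S x j') + phiJ (QGEM.merge S y j')) := by ring
    rw [harg, ht, QGEM.phase S φ Φ0 hΦ0 hodd phiJ hphiJ n x y j j']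
    congr 1
    have hs : Real.sqrt (2 ^ N) ^ 2 = 2 ^ N := Real.sq_sqrt (by positivity)
    have h4 : (1 / Real.sqrt (2 ^ N)) ^ 4 = 1 / 4 ^ N := by
      rw [show 4 = 2 * 2 from rfl, pow_mul, div_pow, one_pow, hs, div_pow, one_pow]
      rw [show ((2 : ℝ) ^ N) ^ 2 = 4 ^ N by rw [pow_two, ← mul_pow]; norm_num]
    calc (Complex.ofReal (1 / Real.sqrt (2 ^ N))) ^ 4
        = Complex.ofReal ((1 / Real.sqrt (2 ^ N)) ^ 4) := by push_cast; ring
      _ = Complex.ofReal (1 / 4 ^ N) := by rw [h4]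
      _ = 1 / 4 ^ N := by push_cast; ring
  have hS : (∑ x : {i : Fin N // i ∈ S} → Fin 2,
      ∑ y : {i : Fin N // i ∈ S} → Fin 2,
        ‖(∑ j : {i : Fin N // i ∈ Sᶜ} → Fin 2,
          ψ t (QGEM.merge S x j) *
            (starRingEnd ℂ) (ψ t (QGEM.merge S y j)))‖ ^ 2) = 1 / 2 := by
    have habs : ∀ z : ℂ, ‖z‖ ^ 2 = (z * (starRingEnd ℂ) z).re := by
      intro z
      rw [Complex.mul_conj, Complex.ofReal_re]
      exact Complex.sq_norm z
    simp only [habs]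
    have hre : (∑ x : {i : Fin N // i ∈ S} → Fin 2,
        ∑ y : {i : Fin N // i ∈ S} → Fin 2,
          ((∑ j : {i : Fin N // i ∈ Sᶜ} → Fin 2,
            ψ t (QGEM.merge S x j) * (starRingEnd ℂ) (ψ t (QGEM.merge S y j))) *
          (starRingEnd ℂ) (∑ j : {i : Fin N // i ∈ Sᶜ} → Fin 2,
            ψ t (QGEM.merge S x j) * (starRingEnd ℂ) (ψ t (QGEM.merge S y j)))).re)
        = (∑ x : {i : Fin N // i ∈ S} → Fin 2,
        ∑ y : {i : Fin N // i ∈ S} → Fin 2,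
          ((∑ j : {i : Fin N // i ∈ Sᶜ} → Fin 2,
            ψ t (QGEM.merge S x j) * (starRingEnd ℂ) (ψ t (QGEM.merge S y j))) *
          (starRingEnd ℂ) (∑ j : {i : Fin N // i ∈ Sᶜ} → Fin 2,
            ψ t (QGEM.merge S x j) * (starRingEnd ℂ) (ψ t (QGEM.merge S y j))))).re := by
      rw [Complex.re_sum]
      exact Finset.sum_congr rfl fun x _ => (Complex.re_sum _ _).symm
    rw [hre]
    have hC : (∑ x : {i : Fin N // i ∈ S} → Fin 2,
        ∑ y : {i : Fin N // i ∈ S} → Fin 2,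
          ((∑ j : {i : Fin N // i ∈ Sᶜ} → Fin 2,
            ψ t (QGEM.merge S x j) * (starRingEnd ℂ) (ψ t (QGEM.merge S y j))) *
          (starRingEnd ℂ) (∑ j : {i : Fin N // i ∈ Sᶜ} → Fin 2,
            ψ t (QGEM.merge S x j) * (starRingEnd ℂ) (ψ t (QGEM.merge S y j)))))
        = 1 / 2 := by
      calc (∑ x : {i : Fin N // i ∈ S} → Fin 2,
          ∑ y : {i : Fin N // i ∈ S} → Fin 2,
            ((∑ j : {i : Fin N // i ∈ Sᶜ} → Fin 2,
              ψ t (QGEM.merge S x j) * (starRingEnd ℂ) (ψ t (QGEM.merge S y j))) *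
            (starRingEnd ℂ) (∑ j : {i : Fin N // i ∈ Sᶜ} → Fin 2,
              ψ t (QGEM.merge S x j) * (starRingEnd ℂ) (ψ t (QGEM.merge S y j)))))
          = ∑ x : {i : Fin N // i ∈ S} → Fin 2, ∑ y : {i : Fin N // i ∈ S} → Fin 2,
            ∑ j : {i : Fin N // i ∈ Sᶜ} → Fin 2, ∑ j' : {i : Fin N // i ∈ Sᶜ} → Fin 2,
              (ψ t (QGEM.merge S x j) * (starRingEnd ℂ) (ψ t (QGEM.merge S y j))) *
                (starRingEnd ℂ) (ψ t (QGEM.merge S x j') *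
                  (starRingEnd ℂ) (ψ t (QGEM.merge S y j'))) := by
            refine Finset.sum_congr rfl fun x _ => Finset.sum_congr rfl fun y _ => ?_
            rw [map_sum, Finset.sum_mul_sum]
        _ = ∑ x : {i : Fin N // i ∈ S} → Fin 2, ∑ y : {i : Fin N // i ∈ S} → Fin 2,
            ∑ j : {i : Fin N // i ∈ Sᶜ} → Fin 2, ∑ j' : {i : Fin N // i ∈ Sᶜ} → Fin 2,
              ((1 : ℂ) / 4 ^ N) *
                ∏ u, ∏ w, (if x u = y u ∨ j w = j' w then (1 : ℂ) else -1) := by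
            simp only [hT]
        _ = ((1 : ℂ) / 4 ^ N) *
            ∑ x : {i : Fin N // i ∈ S} → Fin 2, ∑ y : {i : Fin N // i ∈ S} → Fin 2,
            ∑ j : {i : Fin N // i ∈ Sᶜ} → Fin 2, ∑ j' : {i : Fin N // i ∈ Sᶜ} → Fin 2,
              ∏ u, ∏ w, (if x u = y u ∨ j w = j' w then (1 : ℂ) else -1) := by
            simp only [← Finset.mul_sum]
        _ = ((1 : ℂ) / 4 ^ N) * (4 ^ S.card * 4 ^ Sᶜ.card / 2) := by
            rw [QGEM.count S hS1 hb]
        _ = 1 / 2 := by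
            rw [← pow_add, habN]
            have h4N : ((4 : ℂ)) ^ N ≠ 0 := pow_ne_zero _ (by norm_num)
            field_simp
    rw [hC]
    rw [show (1 / 2 : ℂ) = ((1 / 2 : ℝ) : ℂ) by push_cast; ring]
    rw [Complex.ofReal_re]
  rw [hS]
  norm_num
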